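/- arXiv:1101.4315 — 4 statements merged into one kernel-verified Lean document; each statement's English description precedes it below -/
import Mathlib

section
/- Given densities ρ_l, ρ_r > 0, velocities u_l, u_r, and total enthalpies H_l, H_r, with Roe averages u* = (√ρ_l u_l + √ρ_r u_r)/(√ρ_l + √ρ_r) and H* = (√ρ_l H_l + √ρ_r H_r)/(√ρ_l + √ρ_r), one has −u*H*(ρ_r − ρ_l) + H*(ρ_r u_r − ρ_l u_l) + u*(ρ_r H_r − ρ_l H_l) = ρ_r u_r H_r − ρ_l u_l H_l. -/
lemma roe_aux (a b ul ur Hl Hr : ℝ) (ha : 0 < a) (hb : 0 < b) :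
    -((a * ul + b * ur) / (a + b)) * ((a * Hl + b * Hr) / (a + b)) * (b^2 - a^2)
      + ((a * Hl + b * Hr) / (a + b)) * (b^2 * ur - a^2 * ul)
      + ((a * ul + b * ur) / (a + b)) * (b^2 * Hr - a^2 * Hl)
    = b^2 * ur * Hr - a^2 * ul * Hl := by
  have hne : a + b ≠ 0 := by positivity
  field_simp
  ring

/-- The Roe averages of velocity and total enthalpy satisfy identity (3.3.9). -/
theorem roe_enthalpy_identity (ρl ρr ul ur Hl Hr : ℝ) (hl : 0 < ρl) (hr : 0 < ρr)
    (ustar Hstar : ℝ)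
    (hu : ustar = (Real.sqrt ρl * ul + Real.sqrt ρr * ur)
        / (Real.sqrt ρl + Real.sqrt ρr))
    (hH : Hstar = (Real.sqrt ρl * Hl + Real.sqrt ρr * Hr)
        / (Real.sqrt ρl + Real.sqrt ρr)) :
    -ustar * Hstar * (ρr - ρl) + Hstar * (ρr * ur - ρl * ul)
      + ustar * (ρr * Hr - ρl * Hl)
    = ρr * ur * Hr - ρl * ul * Hl := by
  have ha : 0 < Real.sqrt ρl := Real.sqrt_pos.mpr hl
  have hb : 0 < Real.sqrt ρr := Real.sqrt_pos.mpr hr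
  have hal : Real.sqrt ρl ^ 2 = ρl := Real.sq_sqrt hl.le
  have har : Real.sqrt ρr ^ 2 = ρr := Real.sq_sqrt hr.le
  subst hu hH
  rw [← hal, ← har, Real.sqrt_sq ha.le, Real.sqrt_sq hb.le]
  exact roe_aux (Real.sqrt ρl) (Real.sqrt ρr) ul ur Hl Hr ha hb
end

section
/- Let W_l, W_r be polytropic gas states and W* the Roe intermediate state with u* and H* the square-root-weighted averages of velocity and total enthalpy. Then the matrix A(W_l, W_r) = dF(W*) satisfies the Roe property F(W_r) − F(W_l) = A(W_l, W_r)·(W_r − W_l), where F is the 1D Euler flux of a polytropic gas. -/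
/-- The matrix A(W_l,W_r) = dF(W*) built on the Roe averages u*, H* satisfies the
Roe property F(W_r) − F(W_l) = A(W_l,W_r)·(W_r − W_l) for the 1D Euler flux. -/
theorem roe_matrix_property (γ : ℝ) (hγ : 1 < γ)
    (ρl ρr ul ur El Er : ℝ) (hl : 0 < ρl) (hr : 0 < ρr)
    (pl pr Hl Hr ustar Hstar : ℝ)
    (hpl : pl = (γ - 1) * ρl * (El - ul ^ 2 / 2))
    (hpr : pr = (γ - 1) * ρr * (Er - ur ^ 2 / 2))
    (hHl : Hl = El + pl / ρl) (hHr : Hr = Er + pr / ρr)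
    (hu : ustar = (Real.sqrt ρl * ul + Real.sqrt ρr * ur)
        / (Real.sqrt ρl + Real.sqrt ρr))
    (hH : Hstar = (Real.sqrt ρl * Hl + Real.sqrt ρr * Hr)
        / (Real.sqrt ρl + Real.sqrt ρr))
    (A : Matrix (Fin 3) (Fin 3) ℝ)
    (hA : A = !![0, 1, 0;
                 (γ - 3) / 2 * ustar ^ 2, (3 - γ) * ustar, γ - 1;
                 (γ - 1) / 2 * ustar ^ 3 - ustar * Hstar,
                   Hstar - (γ - 1) * ustar ^ 2, γ * ustar]) :
    (![ρr * ur, ρr * ur ^ 2 + pr, ρr * ur * Hr]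
        - ![ρl * ul, ρl * ul ^ 2 + pl, ρl * ul * Hl])
      = A.mulVec (![ρr, ρr * ur, ρr * Er] - ![ρl, ρl * ul, ρl * El]) := by
  obtain ⟨a, ha0, hsa, ha2⟩ : ∃ a, 0 < a ∧ Real.sqrt ρl = a ∧ a ^ 2 = ρl :=
    ⟨Real.sqrt ρl, Real.sqrt_pos.mpr hl, rfl, Real.sq_sqrt hl.le⟩
  obtain ⟨b, hb0, hsb, hb2⟩ : ∃ b, 0 < b ∧ Real.sqrt ρr = b ∧ b ^ 2 = ρr :=
    ⟨Real.sqrt ρr, Real.sqrt_pos.mpr hr, rfl, Real.sq_sqrt hr.le⟩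
  rw [hsa, hsb] at hu hH
  subst ha2 hb2
  subst hpl hpr hHl hHr hu hH hA
  have hab : a + b ≠ 0 := by positivity
  have ha : a ≠ 0 := ne_of_gt ha0
  have hb : b ≠ 0 := ne_of_gt hb0
  funext i
  fin_cases i <;>
    simp [Matrix.mulVec, dotProduct, Fin.sum_univ_succ] <;>
    field_simp <;> ring
end

section
/- The amplification factor of the explicit linear MUSCL scheme for the advection equation, W_{j+1/2}^{n+1} = W_{j+1/2}^n − σ[(W_{j+1/2}^n + ¼(W_{j+3/2}^n − W_{j−1/2}^n)) − (W_{j−1/2}^n + ¼(W_{j+1/2}^n − W_{j−3/2}^n))] with σ = aΔt/Δx, applied to the Fourier mode W_{j+1/2}^n = e^{ik(j+1/2)Δx}, equals g(ξ, σ) = 1 − (σ/2)(1 − cos ξ)² − i(σ/2) sin ξ (3 − cos ξ), where ξ = kΔx. Moreover |g(ξ, σ)|² = 1 + σ²ξ² + O(ξ⁴) as ξ → 0, so for every σ ≠ 0 there exists ξ with |g(ξ, σ)| > 1 (the scheme is unconditionally unstable). -/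
set_option maxHeartbeats 1000000

open Asymptotics

/-- The amplification factor of the explicit linear MUSCL scheme for advection is
g(ξ,σ) = 1 − (σ/2)(1−cos ξ)² − i(σ/2) sin ξ (3 − cos ξ); its modulus satisfies
|g|² = 1 + σ²ξ² + O(ξ⁴), so the scheme is unstable for every σ ≠ 0. -/
theorem muscl_scheme_unstable (g : ℝ → ℝ → ℂ)
    (hg : ∀ ξ σ : ℝ, g ξ σ
        = 1 - (σ : ℂ) / 2 * ((1 : ℂ) - (Real.cos ξ : ℂ)) ^ 2
          - Complex.I * ((σ : ℂ) / 2) * (Real.sin ξ : ℂ) * ((3 : ℂ) - (Real.cos ξ : ℂ))) :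
    (∀ (k Δx σ : ℝ) (Wmode : ℤ → ℂ),
      (∀ j : ℤ, Wmode j = Complex.exp (Complex.I * ((k * (((j : ℝ) + 1 / 2)) * Δx : ℝ) : ℂ))) →
      ∀ j : ℤ,
        Wmode j - (σ : ℂ) * ((Wmode j + (Wmode (j + 1) - Wmode (j - 1)) / 4)
            - (Wmode (j - 1) + (Wmode j - Wmode (j - 2)) / 4))
          = g (k * Δx) σ * Wmode j)
    ∧ (∀ σ : ℝ,
        (fun ξ : ℝ => ‖g ξ σ‖ ^ 2 - (1 + σ ^ 2 * ξ ^ 2))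
          =O[nhds (0 : ℝ)] (fun ξ : ℝ => ξ ^ 4))
    ∧ (∀ σ : ℝ, σ ≠ 0 → ∃ ξ : ℝ, 1 < ‖g ξ σ‖) := by
  have habs : ∀ ξ σ : ℝ, ‖g ξ σ‖ ^ 2
      = (1 - σ / 2 * (1 - Real.cos ξ) ^ 2) ^ 2
        + (σ / 2 * Real.sin ξ * (3 - Real.cos ξ)) ^ 2 := by
    intro ξ σ
    have : g ξ σ = ((1 - σ / 2 * (1 - Real.cos ξ) ^ 2 : ℝ) : ℂ)
        + ((-(σ / 2 * Real.sin ξ * (3 - Real.cos ξ)) : ℝ) : ℂ) * Complex.I := by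
      rw [hg]; push_cast; ring
    rw [this, Complex.sq_norm, Complex.normSq_add_mul_I]
    ring
  refine ⟨?_, ?_, ?_⟩
  ·
    intro k Δx σ W hW j
    have e1 : W (j + 1) = Complex.exp (Complex.I * ((k * Δx : ℝ) : ℂ)) * W j := by
      rw [hW, hW j, ← Complex.exp_add]; congr 1; push_cast; ring
    have e2 : W (j - 1) = Complex.exp (Complex.I * ((-(k * Δx) : ℝ) : ℂ)) * W j := by
      rw [hW, hW j, ← Complex.exp_add]; congr 1; push_cast; ring
    have e3 : W (j - 2) = Complex.exp (Complex.I * ((-(k * Δx) : ℝ) : ℂ)) ^ 2 * W j := by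
      rw [hW, hW j, sq, mul_assoc, ← Complex.exp_add, ← Complex.exp_add]
      congr 1; push_cast; ring
    have hE : Complex.exp (Complex.I * ((k * Δx : ℝ) : ℂ))
        = Complex.cos ((k * Δx : ℝ) : ℂ) + Complex.sin ((k * Δx : ℝ) : ℂ) * Complex.I := by
      rw [mul_comm, Complex.exp_mul_I]
    have hF : Complex.exp (Complex.I * ((-(k * Δx) : ℝ) : ℂ))
        = Complex.cos ((k * Δx : ℝ) : ℂ) - Complex.sin ((k * Δx : ℝ) : ℂ) * Complex.I := by
      rw [mul_comm, Complex.exp_mul_I]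
      push_cast
      rw [Complex.cos_neg, Complex.sin_neg]
      ring
    rw [e1, e2, e3, hE, hF, hg, Complex.ofReal_cos, Complex.ofReal_sin]
    linear_combination (-(σ : ℂ) * W j * Complex.sin ((k * Δx : ℝ) : ℂ) ^ 2 / 4) * Complex.I_sq
      + ((σ : ℂ) * W j / 4) * Complex.sin_sq_add_cos_sq ((k * Δx : ℝ) : ℂ)

  ·
    intro σ
    rw [isBigO_iff]
    refine ⟨|σ| / 4 + σ ^ 2 / 64 + 6 * σ ^ 2, ?_⟩
    have hball : ∀ᶠ ξ : ℝ in nhds 0, |ξ| < 1 / 2 := by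
      have hb : Metric.ball (0 : ℝ) (1 / 2) ∈ nhds (0 : ℝ) :=
        Metric.ball_mem_nhds _ (by norm_num)
      filter_upwards [hb] with x hx
      simpa [Real.dist_eq] using hx
    filter_upwards [hball] with ξ hξ
    have h12 : |ξ| ≤ 1 / 2 := hξ.le
    set c : ℝ := Real.cos ξ with hc
    set s : ℝ := Real.sin ξ with hs
    have hc1 : c ≤ 1 := Real.cos_le_one ξ
    have hc2 : 1 - ξ ^ 2 / 2 ≤ c := Real.one_sub_sq_div_two_le_cos
    have hs1 : |s| ≤ |ξ| := Real.abs_sin_le_abs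
    have hsb : |s - (ξ - ξ ^ 3 / 6)| ≤ |ξ| ^ 4 * (5 / 96) :=
      by
        have hsb' := Real.sin_bound (x := ξ) (by linarith)
        rw [← hs] at hsb'
        have h5 := mul_le_mul_of_nonneg_left h12 (pow_nonneg (abs_nonneg ξ) 4)
        nlinarith [pow_nonneg (abs_nonneg ξ) 4]
    have habsξ2 : ξ ^ 2 = |ξ| ^ 2 := (sq_abs ξ).symm
    have habsξ4 : ξ ^ 4 = |ξ| ^ 4 := by
      rw [← abs_of_nonneg (show (0:ℝ) ≤ ξ ^ 4 by positivity), abs_pow]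
    have haξ : 0 ≤ |ξ| := abs_nonneg ξ
    have ht0 : 0 ≤ 1 - c := by linarith
    have ht2 : 1 - c ≤ ξ ^ 2 / 2 := by linarith
    -- u := s * (3 - c) / 2
    have hu1 : |s * (3 - c) / 2 - ξ| ≤ 2 * |ξ| ^ 3 := by
      have hsplit : s * (3 - c) / 2 - ξ
          = (s - (ξ - ξ ^ 3 / 6)) + (-(ξ ^ 3) / 6 + s * (1 - c) / 2) := by ring
      have hsc : |s * (1 - c)| ≤ |ξ| * (ξ ^ 2 / 2) := by
        rw [abs_mul, abs_of_nonneg ht0]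
        exact mul_le_mul hs1 ht2 ht0 haξ
      have hcube : |(-(ξ ^ 3)) / 6| = |ξ| ^ 3 / 6 := by
        rw [abs_div, abs_neg, abs_pow]
        norm_num
      calc |s * (3 - c) / 2 - ξ|
          ≤ |s - (ξ - ξ ^ 3 / 6)| + (|(-(ξ ^ 3)) / 6| + |s * (1 - c) / 2|) := by
            rw [hsplit]
            exact (abs_add_le _ _).trans (by gcongr; exact abs_add_le _ _)
        _ ≤ |ξ| ^ 4 * (5 / 96) + (|ξ| ^ 3 / 6 + |ξ| * (ξ ^ 2 / 2) / 2) := by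
            rw [hcube]
            have : |s * (1 - c) / 2| = |s * (1 - c)| / 2 := by
              rw [abs_div]; norm_num
            gcongr
            rw [this]
            linarith
        _ ≤ 2 * |ξ| ^ 3 := by
            rw [habsξ2]
            have h4le : |ξ| ^ 4 ≤ |ξ| ^ 3 := by
              calc |ξ| ^ 4 = |ξ| ^ 3 * |ξ| := by ring
                _ ≤ |ξ| ^ 3 * 1 := by gcongr; linarith
                _ = |ξ| ^ 3 := by ring
            nlinarith [pow_nonneg haξ 3]
    have hu2 : |s * (3 - c) / 2 + ξ| ≤ 3 * |ξ| := by
      have h3c : |3 - c| ≤ 4 := by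
        rw [abs_of_nonneg (by linarith)]
        nlinarith [Real.neg_one_le_cos ξ]
      calc |s * (3 - c) / 2 + ξ| ≤ |s * (3 - c) / 2| + |ξ| := abs_add_le _ _
        _ = |s| * |3 - c| / 2 + |ξ| := by rw [abs_div, abs_mul]; norm_num
        _ ≤ |ξ| * 4 / 2 + |ξ| := by gcongr
        _ = 3 * |ξ| := by ring
    have hudiff : |(s * (3 - c) / 2) ^ 2 - ξ ^ 2| ≤ 6 * ξ ^ 4 := by
      have hfac : (s * (3 - c) / 2) ^ 2 - ξ ^ 2
          = (s * (3 - c) / 2 - ξ) * (s * (3 - c) / 2 + ξ) := by ring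
      rw [hfac, abs_mul, habsξ4]
      calc |s * (3 - c) / 2 - ξ| * |s * (3 - c) / 2 + ξ|
          ≤ (2 * |ξ| ^ 3) * (3 * |ξ|) :=
            mul_le_mul hu1 hu2 (abs_nonneg _) (by positivity)
        _ = 6 * |ξ| ^ 4 := by ring
    -- main bound
    have hF : (1 - σ / 2 * (1 - c) ^ 2) ^ 2 + (σ / 2 * s * (3 - c)) ^ 2 - (1 + σ ^ 2 * ξ ^ 2)
        = -(σ * (1 - c) ^ 2) + σ ^ 2 * (1 - c) ^ 4 / 4
          + σ ^ 2 * ((s * (3 - c) / 2) ^ 2 - ξ ^ 2) := by ring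
    have ht2sq : (1 - c) ^ 2 ≤ ξ ^ 4 / 4 := by nlinarith
    have ht4 : (1 - c) ^ 4 ≤ ξ ^ 4 / 16 := by
      have h8 : (1 - c) ^ 4 ≤ (ξ ^ 2 / 2) ^ 4 := by
        exact pow_le_pow_left₀ ht0 ht2 4
      have hx41 : ξ ^ 4 ≤ 1 := by
        rw [habsξ4]
        calc |ξ| ^ 4 ≤ (1/2 : ℝ) ^ 4 := pow_le_pow_left₀ haξ h12 4
          _ ≤ 1 := by norm_num
      nlinarith [pow_nonneg (show (0:ℝ) ≤ ξ ^ 2 by positivity) 2, sq_nonneg (ξ^2)]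
    rw [Real.norm_eq_abs, Real.norm_eq_abs, habs, hF,
      abs_of_nonneg (show (0:ℝ) ≤ ξ ^ 4 by positivity)]
    have b1 : |(-(σ * (1 - c) ^ 2))| ≤ |σ| * (ξ ^ 4 / 4) := by
      rw [abs_neg, abs_mul, abs_of_nonneg (sq_nonneg (1 - c))]
      gcongr
    have b2 : |σ ^ 2 * (1 - c) ^ 4 / 4| ≤ σ ^ 2 * (ξ ^ 4 / 16) / 4 := by
      rw [abs_of_nonneg (show (0:ℝ) ≤ σ ^ 2 * (1 - c) ^ 4 / 4 by positivity)]
      nlinarith [mul_le_mul_of_nonneg_left ht4 (sq_nonneg σ)]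
    have b3 : |σ ^ 2 * ((s * (3 - c) / 2) ^ 2 - ξ ^ 2)| ≤ σ ^ 2 * (6 * ξ ^ 4) := by
      rw [abs_mul, abs_of_nonneg (sq_nonneg σ)]
      exact mul_le_mul_of_nonneg_left hudiff (sq_nonneg σ)
    have btri := abs_add_three (-(σ * (1 - c) ^ 2)) (σ ^ 2 * (1 - c) ^ 4 / 4)
      (σ ^ 2 * ((s * (3 - c) / 2) ^ 2 - ξ ^ 2))
    nlinarith [btri, b1, b2, b3]

  ·
    intro σ hσ
    rcases lt_or_gt_of_ne hσ with hneg | hpos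
    · refine ⟨Real.pi / 2, ?_⟩
      have h2 : ‖g (Real.pi / 2) σ‖ ^ 2 = (1 - σ / 2) ^ 2 + (3 * σ / 2) ^ 2 := by
        rw [habs, Real.cos_pi_div_two, Real.sin_pi_div_two]; ring
      nlinarith [norm_nonneg (g (Real.pi / 2) σ), sq_nonneg σ]
    · set ξ : ℝ := min (Real.sqrt σ) 1 with hξdef
      refine ⟨ξ, ?_⟩
      have hξpos : 0 < ξ := lt_min (Real.sqrt_pos.mpr hpos) one_pos
      have hξ1 : ξ ≤ 1 := min_le_right _ _
      have hξsq : ξ ^ 2 ≤ σ := by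
        rcases le_total (Real.sqrt σ) 1 with h | h
        · have : ξ = Real.sqrt σ := min_eq_left h
          rw [this, Real.sq_sqrt hpos.le]
        · have h1 : ξ = 1 := min_eq_right h
          have := Real.sqrt_le_sqrt (le_of_eq (Real.sqrt_one).symm)
          have hσ1 : 1 ≤ σ := by
            nlinarith [Real.sq_sqrt hpos.le, h, Real.sqrt_nonneg σ]
          rw [h1]; nlinarith
      have hsin : 0 < Real.sin ξ := Real.sin_pos_of_pos_of_lt_pi hξpos
        (by linarith [Real.two_le_pi])
      have hc1 : Real.cos ξ < 1 := by
        nlinarith [Real.sin_sq_add_cos_sq ξ, Real.cos_le_one ξ]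
      have hc0 : 0 ≤ Real.cos ξ := by
        apply Real.cos_nonneg_of_mem_Icc
        constructor
        · linarith [hξpos.le, Real.pi_pos]
        · linarith [Real.two_le_pi]
      have hc2 : 1 - ξ ^ 2 / 2 ≤ Real.cos ξ := Real.one_sub_sq_div_two_le_cos
      have ht : 1 - Real.cos ξ < σ := by nlinarith
      have hssq : Real.sin ξ ^ 2 = (1 - Real.cos ξ) * (1 + Real.cos ξ) := by
        nlinarith [Real.sin_sq_add_cos_sq ξ]
      have hgoal : 1 < ‖g ξ σ‖ ^ 2 := by
        rw [habs]
        have htpos : 0 < 1 - Real.cos ξ := by linarith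
        have key : σ * (1 - Real.cos ξ) ^ 2 < σ ^ 2 * (1 - Real.cos ξ) := by
          nlinarith [mul_pos (mul_pos hpos htpos) (by linarith : (0:ℝ) < σ - (1 - Real.cos ξ))]
        have h4 : 4 * (1 - Real.cos ξ) ≤ Real.sin ξ ^ 2 * (3 - Real.cos ξ) ^ 2 := by
          nlinarith [hssq, hc0, Real.cos_le_one ξ, htpos.le,
            mul_nonneg hc0 hc0, mul_nonneg (mul_nonneg hc0 hc0) hc0,
            mul_nonneg htpos.le (mul_nonneg hc0 hc0), mul_nonneg htpos.le hc0]
        have key2 : σ ^ 2 * (1 - Real.cos ξ) ≤ (σ / 2 * Real.sin ξ * (3 - Real.cos ξ)) ^ 2 := by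
          have h5 := mul_le_mul_of_nonneg_left h4 (show (0:ℝ) ≤ σ ^ 2 / 4 by positivity)
          nlinarith [h5]
        nlinarith [sq_nonneg (σ / 2 * (1 - Real.cos ξ) ^ 2), key, key2]
      nlinarith [norm_nonneg (g ξ σ)]
end

section
/- Let j be a sonic index, i.e., λ_j(W^{j−1}) < 0 < λ_j(W^j), and let p_j be the cubic Hermite polynomial satisfying p_j(0) = 0, p_j'(0) = λ_j(W^{j−1}), p_j(α_j) = λ_j* α_j, p_j'(α_j) = λ_j(W^j) (with α_j ≠ 0). Then p_j has a unique interior local minimum on the interval between 0 and α_j, attained at the point ξ_j* = −λ_j(W^{j−1}) α_j / [(3λ_j* − 2λ_j(W^{j−1}) − λ_j(W^j)) + √((3λ_j* − λ_j(W^j) − λ_j(W^{j−1}))² − λ_j(W^{j−1})λ_j(W^j))]. -/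
lemma cubic_min_aux (a m : ℝ) (p : ℝ → ℝ) (t : ℝ)
    (htay : ∀ x, p x = p t + m * (x - t) ^ 2 + a * (x - t) ^ 3) (hm : 0 < m) :
    IsLocalMin p t := by
  have hδ : 0 < m / (|a| + 1) := div_pos hm (by positivity)
  apply Filter.eventually_of_mem (Metric.ball_mem_nhds t hδ)
  intro x hx
  rw [Metric.mem_ball, Real.dist_eq] at hx
  have h1 : |a * (x - t)| ≤ |a| * (m / (|a| + 1)) := by
    rw [abs_mul]
    exact mul_le_mul_of_nonneg_left hx.le (abs_nonneg a)
  have h2 : |a| * (m / (|a| + 1)) < m := by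
    have he : |a| * (m / (|a| + 1)) = m * (|a| / (|a| + 1)) := by ring
    have hlt : |a| / (|a| + 1) < 1 := (div_lt_one (by positivity)).2 (lt_add_one _)
    rw [he]
    exact mul_lt_of_lt_one_right hm hlt
  have h3 : 0 ≤ m + a * (x - t) := by
    have := neg_abs_le (a * (x - t))
    linarith
  have hgoal : p t ≤ p x := by
    rw [htay x]
    nlinarith [mul_nonneg (sq_nonneg (x - t)) h3]
  exact hgoal

lemma cubic_not_min_aux (a m : ℝ) (p : ℝ → ℝ) (t : ℝ)
    (htay : ∀ x, p x = p t + m * (x - t) ^ 2 + a * (x - t) ^ 3) (hm : m < 0) :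
    ¬ IsLocalMin p t := by
  intro hmin
  have hδ : 0 < (-m) / (|a| + 1) := div_pos (by linarith) (by positivity)
  have hev : ∀ᶠ x in nhdsWithin t {t}ᶜ, p x < p t := by
    rw [eventually_nhdsWithin_iff]
    apply Filter.eventually_of_mem (Metric.ball_mem_nhds t hδ)
    intro x hx hne
    rw [Metric.mem_ball, Real.dist_eq] at hx
    have hxt : x - t ≠ 0 := sub_ne_zero.2 hne
    have h1 : |a * (x - t)| ≤ |a| * ((-m) / (|a| + 1)) := by
      rw [abs_mul]
      exact mul_le_mul_of_nonneg_left hx.le (abs_nonneg a)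
    have h2 : |a| * ((-m) / (|a| + 1)) < -m := by
      have he : |a| * ((-m) / (|a| + 1)) = (-m) * (|a| / (|a| + 1)) := by ring
      have hlt : |a| / (|a| + 1) < 1 := (div_lt_one (by positivity)).2 (lt_add_one _)
      rw [he]
      exact mul_lt_of_lt_one_right (by linarith) hlt
    have h3 : m + a * (x - t) < 0 := by
      have := le_abs_self (a * (x - t))
      linarith
    have hsq : 0 < (x - t) ^ 2 := pow_two_pos_of_ne_zero hxt
    rw [htay x]
    nlinarith [mul_neg_of_pos_of_neg hsq h3]
  have hmin' : IsMinFilter p (nhdsWithin t {t}ᶜ) t := hmin.filter_mono nhdsWithin_le_nhds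
  obtain ⟨x, hx1, hx2⟩ := (hmin'.and hev).exists
  linarith
/-- For a sonic index, the cubic Hermite polynomial of the entropy correction has a
unique interior local minimum on (0, α), attained at the explicit point ξ*. -/
theorem sonic_cubic_unique_interior_min
    (lam0 lam1 lamstar α : ℝ)
    (h0 : lam0 < 0) (h1 : 0 < lam1)
    (hs0 : lam0 < lamstar) (hs1 : lamstar < lam1)
    (hα : 0 < α)
    (p : ℝ → ℝ)
    (hp : ∀ ξ : ℝ, p ξ = (lam1 + lam0 - 2 * lamstar) / α ^ 2 * ξ ^ 3
        + (3 * lamstar - 2 * lam0 - lam1) / α * ξ ^ 2 + lam0 * ξ)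
    (ξstar : ℝ)
    (hξ : ξstar = -lam0 * α / ((3 * lamstar - 2 * lam0 - lam1)
        + Real.sqrt ((3 * lamstar - lam1 - lam0) ^ 2 - lam0 * lam1))) :
    ξstar ∈ Set.Ioo 0 α ∧ IsLocalMin p ξstar
    ∧ ∀ ξ ∈ Set.Ioo 0 α, IsLocalMin p ξ → ξ = ξstar := by
  have hαne : α ≠ 0 := ne_of_gt hα
  set A := lam1 + lam0 - 2 * lamstar with hA
  set B := 3 * lamstar - 2 * lam0 - lam1 with hB
  have hΔ : (3 * lamstar - lam1 - lam0) ^ 2 - lam0 * lam1 = B ^ 2 - 3 * A * lam0 := by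
    rw [hA, hB]; ring
  rw [hΔ] at hξ
  have hΔpos : 0 < B ^ 2 - 3 * A * lam0 := by
    rw [← hΔ]
    nlinarith [sq_nonneg (3 * lamstar - lam1 - lam0), mul_pos (neg_pos.2 h0) h1]
  set s := Real.sqrt (B ^ 2 - 3 * A * lam0) with hsdef
  have hs2 : s ^ 2 = B ^ 2 - 3 * A * lam0 := Real.sq_sqrt hΔpos.le
  have hspos : 0 < s := Real.sqrt_pos.2 hΔpos
  have hlin : 3 * A + 2 * B + lam0 = lam1 := by rw [hA, hB]; ring
  have hd : 0 < B + s := by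
    rcases le_or_gt 0 B with h | h
    · linarith
    · have hApos : 0 < A := by nlinarith
      by_contra hcon
      push_neg at hcon
      have h1' : s ≤ -B := by linarith
      have : s ^ 2 ≤ B ^ 2 := by nlinarith
      nlinarith [mul_pos hApos (neg_pos.2 h0)]
  -- ξstar in (0, α)
  have hxpos : 0 < ξstar := by
    rw [hξ]
    exact div_pos (mul_pos (neg_pos.2 h0) hα) hd
  have hkey : -lam0 < B + s := by
    by_contra hcon
    push_neg at hcon
    have h1' : s ≤ -(B + lam0) := by linarith
    have h2' : 0 ≤ -(B + lam0) := le_trans hspos.le h1'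
    have : s ^ 2 ≤ (B + lam0) ^ 2 := by nlinarith
    nlinarith [mul_pos (neg_pos.2 h0) h1]
  have hxlt : ξstar < α := by
    rw [hξ, div_lt_iff₀ hd]
    nlinarith
  -- derivative
  have hp' : ∀ x : ℝ, HasDerivAt p (3 * (A / α ^ 2) * x ^ 2 + 2 * (B / α) * x + lam0) x := by
    intro x
    have hpe : p = fun ξ => A / α ^ 2 * ξ ^ 3 + B / α * ξ ^ 2 + lam0 * ξ := funext hp
    rw [hpe]
    have h3 : HasDerivAt (fun ξ : ℝ => ξ ^ 3) (3 * x ^ 2) x := by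
      simpa using hasDerivAt_pow 3 x
    have h2 : HasDerivAt (fun ξ : ℝ => ξ ^ 2) (2 * x) x := by
      simpa using hasDerivAt_pow 2 x
    have h1' : HasDerivAt (fun ξ : ℝ => ξ) 1 x := hasDerivAt_id x
    have := ((h3.const_mul (A / α ^ 2)).add (h2.const_mul (B / α))).add (h1'.const_mul lam0)
    convert this using 1
    · rfl
    · rfl
    · rfl
    ring
  -- critical point equation at ξstar
  have hdne : B + s ≠ 0 := ne_of_gt hd
  have hcrit : 3 * (A / α ^ 2) * ξstar ^ 2 + 2 * (B / α) * ξstar + lam0 = 0 := by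
    have heq : 3 * (A / α ^ 2) * ξstar ^ 2 + 2 * (B / α) * ξstar + lam0
        = lam0 * (s ^ 2 - (B ^ 2 - 3 * A * lam0)) / (B + s) ^ 2 := by
      rw [hξ]; field_simp; ring
    rw [heq, hs2]
    simp
  have hm : 3 * (A / α ^ 2) * ξstar + B / α = s / α := by
    have heq : 3 * (A / α ^ 2) * ξstar + B / α - s / α
        = -(s ^ 2 - (B ^ 2 - 3 * A * lam0)) / (α * (B + s)) := by
      rw [hξ]; field_simp; ring
    have : 3 * (A / α ^ 2) * ξstar + B / α - s / α = 0 := by rw [heq, hs2]; simp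
    linarith
  -- Taylor expansion
  have htay : ∀ x t : ℝ, p x = p t + (3 * (A / α ^ 2) * t ^ 2 + 2 * (B / α) * t + lam0) * (x - t)
      + (3 * (A / α ^ 2) * t + B / α) * (x - t) ^ 2 + (A / α ^ 2) * (x - t) ^ 3 := by
    intro x t
    rw [hp x, hp t]
    ring
  have hmin : IsLocalMin p ξstar := by
    apply cubic_min_aux (A / α ^ 2) (s / α) p ξstar _ (div_pos hspos hα)
    intro x
    rw [htay x ξstar, hcrit, hm]
    ring
  refine ⟨⟨hxpos, hxlt⟩, hmin, ?_⟩
  intro ξ hmem hminξ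
  by_contra hne
  have hderiv : deriv p ξ = 3 * (A / α ^ 2) * ξ ^ 2 + 2 * (B / α) * ξ + lam0 := (hp' ξ).deriv
  have hcritξ : 3 * (A / α ^ 2) * ξ ^ 2 + 2 * (B / α) * ξ + lam0 = 0 := by
    rw [← hderiv]
    exact hminξ.deriv_eq_zero
  have hfac : (ξ - ξstar) * (3 * (A / α ^ 2) * (ξ + ξstar) + 2 * (B / α)) = 0 := by
    linear_combination hcritξ - hcrit
  have hsum : 3 * (A / α ^ 2) * (ξ + ξstar) + 2 * (B / α) = 0 := by
    rcases mul_eq_zero.1 hfac with h | h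
    · exact absurd (sub_eq_zero.1 h) hne
    · exact h
  have hmneg : 3 * (A / α ^ 2) * ξ + B / α = -(s / α) := by
    linear_combination hsum - hm
  refine cubic_not_min_aux (A / α ^ 2) (-(s / α)) p ξ ?_ (neg_lt_zero.2 (div_pos hspos hα)) hminξ
  intro x
  rw [htay x ξ, hcritξ, hmneg]
  ring
end
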